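/- Let S be a numerical semigroup with multiplicity e, let g ∈ D_k, and suppose g + e = Σ_j a_j n_j is a maximal representation with Σ_j a_j = k + p, p ≥ 1. If y ∈ C_h is induced by this representation (i.e. y = Σ b_j n_j with 0 ≤ b_j ≤ a_j and Σ b_j = h) and h ≤ max{p+1, k_0} where k_0 = min{k : D_k ≠ ∅}, then y belongs to the Apéry set of S with respect to e. -/

import Mathlib

open Set

/-- A numerical semigroup: a cofinite submonoid of ℕ. -/
def IsNumSgp (S : Set ℕ) : Prop :=
  0 ∈ S ∧ (∀ a ∈ S, ∀ b ∈ S, a + b ∈ S) ∧ Sᶜ.Finite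

/-- The maximal ideal `M = S \ {0}`. -/
def MS (S : Set ℕ) : Set ℕ := S \ {0}

/-- The multiplicity `e` of `S`, the smallest nonzero element. -/
noncomputable def mult (S : Set ℕ) : ℕ := sInf (MS S)

/-- `nM S h` is the set of sums of `h` elements of `M = S \ {0}` (with `nM S 0 = {0}`). -/
def nM (S : Set ℕ) : ℕ → Set ℕ
  | 0 => {0}
  | k + 1 => {x | ∃ a ∈ MS S, ∃ b ∈ nM S k, x = a + b}

/-- The order of `s`: the largest `h` with `s ∈ hM`. -/
noncomputable def ordS (S : Set ℕ) (s : ℕ) : ℕ := sSup {h | s ∈ nM S h}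

/-- The Apéry set of `S` with respect to the multiplicity `e`:
elements `s ∈ S` with `s - e ∉ S`. -/
def Ap (S : Set ℕ) : Set ℕ := {s ∈ S | ∀ t ∈ S, t + mult S ≠ s}

/-- Elements of the Apéry set of order `k`. -/
def ApK (S : Set ℕ) (k : ℕ) : Set ℕ := {s ∈ Ap S | ordS S s = k}

/-- `C_k = {s ∈ S : ord s = k and s - e ∉ (k-1)M}`. -/
def CK (S : Set ℕ) (k : ℕ) : Set ℕ :=
  {s ∈ S | ordS S s = k ∧ ∀ t ∈ nM S (k - 1), t + mult S ≠ s}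

/-- `D_k = {s ∈ S : ord s = k-1 and ord (s+e) > k}`. -/
def DK (S : Set ℕ) (k : ℕ) : Set ℕ :=
  {s ∈ S | ordS S s = k - 1 ∧ k < ordS S (s + mult S)}

/-- The Hilbert function of `R = k[[S]]`: `H(0) = 1`, `H(n) = |nM \ (n+1)M|`. -/
noncomputable def HF (S : Set ℕ) (n : ℕ) : ℕ := (nM S n \ nM S (n + 1)).ncard

/-- The set of minimal generators of `S`. -/
def MinGens (S : Set ℕ) : Set ℕ :=
  MS S \ {x | ∃ a ∈ MS S, ∃ b ∈ MS S, x = a + b}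

/-- `a` is a maximal representation of `s`: a finitely supported coefficient
function on the minimal generators with `Σ aⱼ nⱼ = s` and `Σ aⱼ = ord s`. -/
def IsMaxRep (S : Set ℕ) (s : ℕ) (a : ℕ →₀ ℕ) : Prop :=
  (↑a.support : Set ℕ) ⊆ MinGens S ∧
  (a.sum fun n c => c * n) = s ∧
  (a.sum fun _ c => c) = ordS S s

/-- `|Supp(s)|`: the maximal number of distinct minimal generators appearing
in a maximal representation of `s`. -/
noncomputable def SuppCard (S : Set ℕ) (s : ℕ) : ℕ :=
  sSup {q | ∃ a : ℕ →₀ ℕ, IsMaxRep S s a ∧ a.support.card = q}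

/-- The Frobenius number of `S`. -/
noncomputable def Frob (S : Set ℕ) : ℕ := sSup Sᶜ

section lems
variable {S : Set ℕ}

lemma mult_mem (hS : IsNumSgp S) : mult S ∈ MS S := by
  have h1 : Sᶜᶜ.Infinite := hS.2.2.infinite_compl
  rw [compl_compl] at h1
  exact Nat.sInf_mem ((h1.diff (Set.finite_singleton 0)).nonempty)

lemma mult_pos (hS : IsNumSgp S) : 0 < mult S :=
  Nat.pos_of_ne_zero (mult_mem hS).2

lemma nM_subset (hS : IsNumSgp S) : ∀ n, ∀ x ∈ nM S n, x ∈ S := by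
  intro n
  induction n with
  | zero => intro x hx; simp only [nM, mem_singleton_iff] at hx; subst hx; exact hS.1
  | succ k ih => rintro x ⟨a, ha, c, hc, rfl⟩; exact hS.2.1 a ha.1 c (ih c hc)

lemma nM_ge (hS : IsNumSgp S) : ∀ n, ∀ x ∈ nM S n, mult S * n ≤ x := by
  intro n
  induction n with
  | zero => intro x _; simp
  | succ k ih =>
    rintro x ⟨a, ha, c, hc, rfl⟩
    have h1 : mult S ≤ a := Nat.sInf_le ha
    have h2 := ih c hc
    nlinarith

lemma nM_add (hS : IsNumSgp S) : ∀ m n x y, x ∈ nM S m → y ∈ nM S n → x + y ∈ nM S (m + n) := by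
  intro m
  induction m with
  | zero =>
    intro n x y hx hy
    simp only [nM, mem_singleton_iff] at hx; subst hx; simpa using hy
  | succ k ih =>
    rintro n x y ⟨a, ha, c, hc, rfl⟩ hy
    have hk : k + 1 + n = (k + n) + 1 := by omega
    rw [hk]
    exact ⟨a, ha, c + y, ih n c y hc hy, by ring⟩

lemma ord_bdd (hS : IsNumSgp S) (s : ℕ) : BddAbove {h | s ∈ nM S h} := by
  refine ⟨s, fun m hm => ?_⟩
  have := nM_ge hS m s hm
  have := mult_pos hS
  nlinarith

lemma mem_nM_ord (hS : IsNumSgp S) {s : ℕ} (hs : s ∈ S) : s ∈ nM S (ordS S s) := by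
  have hne : {h | s ∈ nM S h}.Nonempty := by
    rcases eq_or_ne s 0 with rfl | h0
    · exact ⟨0, by simp [nM]⟩
    · exact ⟨1, ⟨s, ⟨hs, h0⟩, 0, by simp [nM]⟩⟩
  exact Nat.sSup_mem hne (ord_bdd hS s)

lemma le_ord (hS : IsNumSgp S) {s m : ℕ} (hm : s ∈ nM S m) : m ≤ ordS S s :=
  le_csSup (ord_bdd hS s) hm

lemma ord_zero_imp (hS : IsNumSgp S) {s : ℕ} (hs : s ∈ S) (h : ordS S s = 0) : s = 0 := by
  by_contra h0
  have : (1 : ℕ) ≤ ordS S s := le_ord hS ⟨s, ⟨hs, h0⟩, 0, by simp [nM]⟩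
  omega

lemma ord_mult (hS : IsNumSgp S) : ordS S (mult S) = 1 := by
  have h1 : (1 : ℕ) ≤ ordS S (mult S) :=
    le_ord hS ⟨mult S, mult_mem hS, 0, by simp [nM]⟩
  have h2 : mult S ∈ nM S (ordS S (mult S)) := mem_nM_ord hS (mult_mem hS).1
  have h3 := nM_ge hS _ _ h2
  have h4 := mult_pos hS
  nlinarith

lemma mul_mem_nM (hS : IsNumSgp S) {a : ℕ} (ha : a ∈ MS S) : ∀ c : ℕ, c * a ∈ nM S c := by
  intro c
  induction c with
  | zero => simp [nM]
  | succ k ih => exact ⟨a, ha, k * a, ih, by ring⟩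

lemma finsupp_mem_nM (hS : IsNumSgp S) (c : ℕ →₀ ℕ) (hc : (↑c.support : Set ℕ) ⊆ MS S) :
    (c.sum fun n k => k * n) ∈ nM S (c.sum fun _ k => k) := by
  induction c using Finsupp.induction with
  | zero => simp [nM]
  | single_add a b f haf hb ih =>
    have hsupp : (Finsupp.single a b + f).support = insert a f.support := by
      rw [Finsupp.support_add_eq, Finsupp.support_single_ne_zero a hb]
      · rfl
      · rw [Finsupp.support_single_ne_zero a hb]
        simpa using haf
    have haMS : a ∈ MS S := by
      apply hc; rw [hsupp]; simp
    have hfc : (↑f.support : Set ℕ) ⊆ MS S := by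
      intro x hx; apply hc; rw [hsupp]; simp_all
    have e1 : ((Finsupp.single a b + f).sum fun n k => k * n)
        = b * a + (f.sum fun n k => k * n) := by
      rw [Finsupp.sum_add_index' (fun i => by simp) (fun i x y => by ring),
        Finsupp.sum_single_index (by simp)]
    have e2 : ((Finsupp.single a b + f).sum fun _ k => k)
        = b + (f.sum fun _ k => k) := by
      rw [Finsupp.sum_add_index' (fun i => rfl) (fun i x y => rfl),
        Finsupp.sum_single_index rfl]
    rw [e1, e2]
    exact nM_add hS _ _ _ _ (mul_mem_nM hS haMS b) (ih hfc)

lemma sum_split (a b : ℕ →₀ ℕ) (hb : b ≤ a) (f : ℕ → ℕ → ℕ)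
    (h0 : ∀ i, f i 0 = 0) (hadd : ∀ i x y, f i (x + y) = f i x + f i y) :
    b.sum f + (a - b).sum f = a.sum f := by
  have hba : ∀ i, b i ≤ a i := fun i => Finsupp.le_def.mp hb i
  have hs1 : b.support ⊆ a.support := fun i hi => by
    simp only [Finsupp.mem_support_iff] at *
    have := hba i; omega
  have hs2 : (a - b).support ⊆ a.support := fun i hi => by
    simp only [Finsupp.mem_support_iff, Finsupp.tsub_apply] at *
    omega
  rw [Finsupp.sum_of_support_subset b hs1 f (fun i _ => h0 i),
    Finsupp.sum_of_support_subset (a - b) hs2 f (fun i _ => h0 i), Finsupp.sum,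
    ← Finset.sum_add_distrib]
  apply Finset.sum_congr rfl
  intro i _
  rw [Finsupp.tsub_apply, ← hadd, Nat.add_sub_cancel' (hba i)]

end lems

theorem stmt5 (S : Set ℕ) (hS : IsNumSgp S) (k p : ℕ) (hp : 1 ≤ p)
    (g : ℕ) (hg : g ∈ DK S k) (a : ℕ →₀ ℕ) (ha : IsMaxRep S (g + mult S) a)
    (hsum : (a.sum fun _ c => c) = k + p)
    (b : ℕ →₀ ℕ) (hb : b ≤ a) (h : ℕ) (hh : (b.sum fun _ c => c) = h)
    (y : ℕ) (hy : y = b.sum fun n c => c * n) (hyC : y ∈ CK S h)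
    (hmax : h ≤ max (p + 1) (sInf {k | (DK S k).Nonempty})) :
    y ∈ Ap S := by
  obtain ⟨hyS, hordy, hyCK⟩ := hyC
  refine ⟨hyS, ?_⟩
  by_contra hcon
  push_neg at hcon
  obtain ⟨t, htS, hty⟩ := hcon
  have htord : t ∈ nM S (ordS S t) := mem_nM_ord hS htS
  have hordy_ge : ordS S t + 1 ≤ h := by
    have h1 : t + mult S ∈ nM S (ordS S t + 1) := by
      have := nM_add hS (ordS S t) 1 t (mult S) htord
        ⟨mult S, mult_mem hS, 0, by simp [nM]⟩
      simpa using this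
    rw [hty] at h1
    have := le_ord hS h1
    omega
  have hne : ordS S t ≠ h - 1 := by
    intro hEq
    exact hyCK t (hEq ▸ htord) hty
  rcases le_or_gt h (p + 1) with hc | hc
  · -- Case B: h ≤ p + 1
    have hminsub : (↑a.support : Set ℕ) ⊆ MS S := fun x hx => (ha.1 hx).1
    have hs2 : (↑(a - b).support : Set ℕ) ⊆ MS S := by
      intro x hx
      apply hminsub
      simp only [Finset.mem_coe, Finsupp.mem_support_iff, Finsupp.tsub_apply] at *
      omega
    have hz : ((a - b).sum fun n c => c * n) ∈ nM S ((a - b).sum fun _ c => c) :=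
      finsupp_mem_nM hS _ hs2
    have hq : h + ((a - b).sum fun _ c => c) = k + p := by
      rw [← hh, ← hsum]
      exact sum_split a b hb _ (fun i => rfl) (fun i x z => rfl)
    have hyz : y + ((a - b).sum fun n c => c * n) = g + mult S := by
      rw [hy, ← ha.2.1]
      exact sum_split a b hb _ (fun i => by simp) (fun i x z => by ring)
    have hg' : g = t + ((a - b).sum fun n c => c * n) := by omega
    have hgmem : g ∈ nM S (ordS S t + ((a - b).sum fun _ c => c)) := by
      rw [hg']; exact nM_add hS _ _ _ _ htord hz
    have hordg := le_ord hS hgmem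
    have hordg_eq : ordS S g = k - 1 := hg.2.1
    have ht0 : ordS S t = 0 := by omega
    have ht0' : t = 0 := ord_zero_imp hS htS ht0
    subst ht0'
    have hye : y = mult S := by omega
    have hh1 : h = 1 := by rw [← hordy, hye, ord_mult hS]
    exact hyCK 0 (by simp [hh1, nM]) (by omega)
  · -- Case A: k0 ≥ h
    have hk0 : h ≤ sInf {k | (DK S k).Nonempty} := by omega
    have hDK : t ∈ DK S (ordS S t + 1) := by
      refine ⟨htS, by simp, ?_⟩
      have hEq : ordS S (t + mult S) = h := by rw [hty]; exact hordy
      omega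
    have hmem : (ordS S t + 1) ∈ {k | (DK S k).Nonempty} := ⟨t, hDK⟩
    have := Nat.sInf_le hmem
    omega
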